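/- Let t ≥ 1 and K ≥ 1 be natural numbers and γ ≥ 0 a real number. Suppose that for each s = 1, …, t+1 we are given a family of s 'leaves', consisting of weights f_s : {1,…,s} → ℝ with f_s(n) ≥ 0 and Σ_n f_s(n) = 1, and class distributions π_s : {1,…,s} → (probability vectors on {1,…,K}). Define W_s = Σ_{n=1}^{s} f_s(n)·H(π_s(n)), where H is the Shannon entropy in nats. Assume that for every s with 1 ≤ s ≤ t, the splitting step decreases the weighted entropy by at least γ times the largest leaf weight: W_s − W_{s+1} ≥ γ · max_{1 ≤ n ≤ s} f_s(n). Then the multiclass error rate of the final family satisfies Σ_{n=1}^{t+1} f_{t+1}(n)·(1 − max_{1 ≤ y ≤ K} π_{t+1}(n)(y)) ≤ H(π_1(1)) − γ·ln(t+1). -/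

import Mathlib

/-- Shannon entropy in nats of a vector `p`, with the convention `0 * ln 0 = 0`. -/
noncomputable def shannonEntropyNats {ι : Type*} [Fintype ι] (p : ι → ℝ) : ℝ :=
  ∑ i, Real.negMulLog (p i)

lemma aux_negMulLog_ge (x : ℝ) (hx : 0 ≤ x) : x * (1 - x) ≤ Real.negMulLog x := by
  rcases eq_or_lt_of_le hx with h | h
  · simp [← h, Real.negMulLog]
  · have := Real.log_le_sub_one_of_pos h
    unfold Real.negMulLog
    nlinarith

lemma aux_err_le_entropy {K : ℕ} (hK : 1 ≤ K) (p : Fin K → ℝ)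
    (h0 : ∀ y, 0 ≤ p y) (h1 : ∑ y, p y = 1) :
    1 - Finset.univ.sup' ⟨⟨0, hK⟩, Finset.mem_univ _⟩ p ≤ shannonEntropyNats p := by
  set M := Finset.univ.sup' ⟨⟨0, hK⟩, Finset.mem_univ _⟩ p with hM
  have h2 : ∑ y, p y * p y ≤ ∑ y, p y * M := by
    apply Finset.sum_le_sum
    intro y _
    exact mul_le_mul_of_nonneg_left (Finset.le_sup' p (Finset.mem_univ y)) (h0 y)
  have h3 : ∑ y, p y * M = M := by rw [← Finset.sum_mul, h1, one_mul]
  have h4 : ∑ y, p y * (1 - p y) ≤ shannonEntropyNats p :=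
    Finset.sum_le_sum fun y _ => aux_negMulLog_ge (p y) (h0 y)
  have h5 : ∑ y, p y * (1 - p y) = 1 - ∑ y, p y * p y := by
    simp [mul_sub, Finset.sum_sub_distrib, h1, mul_one]
  linarith

theorem recall_tree_boosting_bound
    (t K : ℕ) (ht : 1 ≤ t) (hK : 1 ≤ K) (γ : ℝ) (hγ : 0 ≤ γ)
    (f : (s : ℕ) → Fin s → ℝ) (π : (s : ℕ) → Fin s → Fin K → ℝ)
    (hf0 : ∀ s, 1 ≤ s → s ≤ t + 1 → ∀ n, 0 ≤ f s n)
    (hf1 : ∀ s, 1 ≤ s → s ≤ t + 1 → ∑ n, f s n = 1)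
    (hπ0 : ∀ s, 1 ≤ s → s ≤ t + 1 → ∀ n y, 0 ≤ π s n y)
    (hπ1 : ∀ s, 1 ≤ s → s ≤ t + 1 → ∀ n, ∑ y, π s n y = 1)
    (hstep : ∀ s, (hs : 1 ≤ s) → s ≤ t →
      (∑ n, f s n * shannonEntropyNats (π s n)) -
          (∑ n, f (s + 1) n * shannonEntropyNats (π (s + 1) n)) ≥
        γ * Finset.univ.sup' ⟨⟨0, hs⟩, Finset.mem_univ _⟩ (f s)) :
    ∑ n, f (t + 1) n *
        (1 - Finset.univ.sup' ⟨⟨0, hK⟩, Finset.mem_univ _⟩ (π (t + 1) n)) ≤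
      shannonEntropyNats (π 1 ⟨0, Nat.one_pos⟩) - γ * Real.log (t + 1) := by
  set W : ℕ → ℝ := fun s => ∑ n, f s n * shannonEntropyNats (π s n) with hW
  -- Step 1: error ≤ W (t+1)
  have step1 : ∑ n, f (t + 1) n *
      (1 - Finset.univ.sup' ⟨⟨0, hK⟩, Finset.mem_univ _⟩ (π (t + 1) n)) ≤ W (t + 1) := by
    apply Finset.sum_le_sum
    intro n _
    exact mul_le_mul_of_nonneg_left
      (aux_err_le_entropy hK (π (t + 1) n) (hπ0 (t + 1) (by omega) le_rfl n)
        (hπ1 (t + 1) (by omega) le_rfl n))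
      (hf0 (t + 1) (by omega) le_rfl n)
  -- Step 3: W 1 = entropy of root
  have root : W 1 = shannonEntropyNats (π 1 ⟨0, Nat.one_pos⟩) := by
    have h1 := hf1 1 le_rfl (by omega)
    simp only [hW, Fin.sum_univ_one] at h1 ⊢
    rw [h1, one_mul]; rfl
  -- Step 2: induction
  have key : ∀ s, 1 ≤ s → s ≤ t + 1 → W s ≤ W 1 - γ * Real.log s := by
    intro s hs1
    induction s, hs1 using Nat.le_induction with
    | base => intro _; simp
    | succ s hs ih =>
      intro hst
      have hle : s ≤ t := by omega
      have ihs := ih (by omega)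
      have hstep' := hstep s hs hle
      -- sup' f s ≥ 1/s
      have hsup : (1 : ℝ) / s ≤ Finset.univ.sup' ⟨⟨0, hs⟩, Finset.mem_univ _⟩ (f s) := by
        set M := Finset.univ.sup' ⟨⟨0, hs⟩, Finset.mem_univ _⟩ (f s) with hMdef
        have hsum : ∑ n, f s n ≤ (s : ℝ) * M := by
          calc ∑ n, f s n ≤ ∑ _n : Fin s, M :=
                Finset.sum_le_sum fun n _ => Finset.le_sup' (f s) (Finset.mem_univ n)
            _ = (s : ℝ) * M := by simp [mul_comm]
        rw [hf1 s hs (by omega)] at hsum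
        have hspos : (0 : ℝ) < s := by positivity
        rw [div_le_iff₀ hspos]
        linarith [hsum]
      -- log(s+1) ≤ log s + 1/s
      have hspos : (0 : ℝ) < s := by exact_mod_cast hs
      have hlog : Real.log (s + 1) ≤ Real.log s + 1 / s := by
        have h := Real.log_le_sub_one_of_pos (show (0:ℝ) < (s + 1) / s by positivity)
        rw [Real.log_div (by positivity) (by positivity)] at h
        have : ((s : ℝ) + 1) / s - 1 = 1 / s := by field_simp; ring
        linarith [this ▸ h]
      have hγsup : γ * (1 / s) ≤ γ * Finset.univ.sup' ⟨⟨0, hs⟩, Finset.mem_univ _⟩ (f s) :=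
        mul_le_mul_of_nonneg_left hsup hγ
      have hγlog : γ * Real.log (s + 1) ≤ γ * Real.log s + γ * (1 / s) := by
        nlinarith [hlog]
      have hcast : ((s : ℝ) + 1) = ((s + 1 : ℕ) : ℝ) := by push_cast; ring
      rw [← hcast]
      linarith [hstep', hγsup]
  have final := key (t + 1) (by omega) le_rfl
  rw [root] at final
  have : ((t : ℝ) + 1) = ((t + 1 : ℕ) : ℝ) := by push_cast; ring
  calc ∑ n, f (t + 1) n * (1 - Finset.univ.sup' ⟨⟨0, hK⟩, Finset.mem_univ _⟩ (π (t + 1) n))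
      ≤ W (t + 1) := step1
    _ ≤ shannonEntropyNats (π 1 ⟨0, Nat.one_pos⟩) - γ * Real.log (t + 1) := by
        rw [this]; exact final
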